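/- The residual residual₀(D) = reach(D ↾ Σ(P^S_Σ ⇓ OId)) of a DATE D, obtained by restricting D to the events appearing in the static program and then applying the reachability reduction, is equivalent to D with respect to the static program: residual₀(D) ≅_{P^S_Σ} D. -/

import Mathlib

open Classical

/-- A property automaton over states `Q` and alphabet `E`: a deterministic and
total transition relation is represented as a transition function. -/
structure PA (Q : Type*) (E : Type*) where
  init : Q
  bad : Set Q
  next : Q → E → Q

namespace PA

variable {Q E : Type*}

/-- Iterated application of the transition function along a ground trace. -/
def run (π : PA Q E) (q : Q) (t : List E) : Q := t.foldl π.next q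

/-- A ground trace satisfies a property automaton iff no prefix of it leads
from the initial state to a bad state. -/
def Sat (t : List E) (π : PA Q E) : Prop :=
  ∀ t' : List E, t' <+: t → π.run π.init t' ∉ π.bad

/-- Equivalence of two property automata with respect to a set of ground traces. -/
def EquivOn (T : Set (List E)) (π π' : PA Q E) : Prop :=
  ∀ t ∈ T, Sat t π ↔ Sat t π'

end PA

/-- A static program: a set of static parametrised traces over identifiers `α`,
together with a must-alias equivalence relation and a may-alias relation. -/
structure SProg (α : Type*) (E : Type*) where
  traces : Set (List (α × E))
  must : α → α → Prop
  may : α → α → Prop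
  must_equiv : Equivalence must
  must_sub_may : ∀ {x y : α}, must x y → may x y

namespace SProg

variable {α E : Type*}

-- Projection of a static parametrised trace onto an identifier `x`,
-- yielding the set of possible ground traces.
open Classical in
noncomputable def proj (P : SProg α E) (x : α) : List (α × E) → Set (List E)
  | [] => {[]}
  | (x', e) :: st =>
      if P.must x x' then (e :: ·) '' P.proj x st
      else if P.may x x' then P.proj x st ∪ (e :: ·) '' P.proj x st
      else P.proj x st

/-- The projection of a static program onto a single identifier. -/
def projId (P : SProg α E) (x : α) : Set (List E) :=
  {t | ∃ st ∈ P.traces, t ∈ P.proj x st}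

/-- The projection of a static program onto all identifiers (`P ⇓ OId`). -/
def projAll (P : SProg α E) : Set (List E) :=
  {t | ∃ st ∈ P.traces, ∃ x : α, t ∈ P.proj x st}

end SProg

/-- Satisfaction of a property automaton by a static parametrised trace:
every projection onto every identifier satisfies the automaton. -/
def PA.SSat {α Q E : Type*} (P : SProg α E) (st : List (α × E)) (π : PA Q E) : Prop :=
  ∀ x : α, ∀ t ∈ P.proj x st, PA.Sat t π

/-- Equivalence of two property automata with respect to a static program. -/
def PA.SEquiv {α Q E : Type*} (P : SProg α E) (π π' : PA Q E) : Prop :=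
  ∀ st ∈ P.traces, PA.SSat P st π ↔ PA.SSat P st π'

/-- A transition of a DATE: source state, event, condition, action, target state. -/
structure DTrans (Q : Type*) (E : Type*) (Θ : Type*) where
  src : Q
  ev : E
  cond : Θ → Bool
  act : Θ → Θ
  tgt : Q

/-- A DATE (without timers/channels): states `Q`, events `E`, monitoring
variable states `Θ`, initial state, initial monitoring state, bad states,
and a transition relation. -/
structure DATE (Q : Type*) (E : Type*) (Θ : Type*) where
  init : Q
  th0 : Θ
  bad : Set Q
  delta : Set (DTrans Q E Θ)

namespace DATE

variable {Q E Θ : Type*}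

/-- Determinism: from each state, any two distinct transitions with the same
event have conditions that are never simultaneously true. -/
def Deterministic (D : DATE Q E Θ) : Prop :=
  ∀ d ∈ D.delta, ∀ d' ∈ D.delta,
    d.src = d'.src → d.ev = d'.ev → d ≠ d' →
      ∀ θ : Θ, ¬(d.cond θ = true ∧ d'.cond θ = true)

/-- The concrete transition function `Δ`. -/
noncomputable def step (D : DATE Q E Θ) (s : Q × Θ) (e : E) : Q × Θ :=
  if h : ∃ d ∈ D.delta, d.src = s.1 ∧ d.ev = e ∧ d.cond s.2 = true
  then (h.choose.tgt, h.choose.act s.2)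
  else s

/-- `Δ*`: iterated concrete transition function along a ground trace. -/
noncomputable def run (D : DATE Q E Θ) (s : Q × Θ) (t : List E) : Q × Θ :=
  t.foldl D.step s

/-- A ground trace satisfies a DATE iff no prefix of it drives `Δ*` from the
initial configuration into a bad state. -/
def Sat (t : List E) (D : DATE Q E Θ) : Prop :=
  ∀ t' : List E, t' <+: t → (D.run (D.init, D.th0) t').1 ∉ D.bad

/-- Equivalence of two DATEs with respect to a set of ground traces. -/
def EquivOn (T : Set (List E)) (D D' : DATE Q E Θ) : Prop :=
  ∀ t ∈ T, Sat t D ↔ Sat t D'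

/-- The static transition relation `q →e_approx q'`. -/
def ApproxStep (D : DATE Q E Θ) (q : Q) (e : E) (q' : Q) : Prop :=
  (∃ d ∈ D.delta, d.src = q ∧ d.ev = e ∧ d.tgt = q' ∧ ¬ ∀ θ : Θ, d.cond θ = false)
  ∨ (q' = q ∧ ¬ ∃ d ∈ D.delta, d.src = q ∧ d.ev = e ∧ d.tgt ≠ q ∧ ∀ θ : Θ, d.cond θ = true)

/-- The static transition function on sets of states. -/
def approxSet (D : DATE Q E Θ) (S : Set Q) (e : E) : Set Q :=
  {q' | ∃ q ∈ S, D.ApproxStep q e q'}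

/-- `approxΔ*`: iterated static transition function along a ground trace. -/
def approxRun (D : DATE Q E Θ) (S : Set Q) (t : List E) : Set Q :=
  t.foldl D.approxSet S

/-- `q ↪ q'`: `q'` is reachable from `q` via the static transition relation. -/
def Reach (D : DATE Q E Θ) (q q' : Q) : Prop :=
  ∃ t : List E, q' ∈ D.approxRun {q} t

/-- `badAfter(q)`: `q` is reachable from the initial state and can reach a bad state. -/
def BadAfter (D : DATE Q E Θ) (q : Q) : Prop :=
  D.Reach D.init q ∧ ∃ q' ∈ D.bad, D.Reach q q'

/-- `goodEntryPoint(q)`. -/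
def GoodEntryPoint (D : DATE Q E Θ) (q : Q) : Prop :=
  ¬ D.BadAfter q ∧ ∃ q' : Q, ∃ e : E, D.BadAfter q' ∧ D.ApproxStep q' e q

/-- `useful(q)`. -/
def Useful (D : DATE Q E Θ) (q : Q) : Prop :=
  D.BadAfter q ∨ D.GoodEntryPoint q

/-- Restriction of a DATE to a set of transitions (`D ↾ δ'`). -/
def restrict (D : DATE Q E Θ) (δ' : Set (DTrans Q E Θ)) : DATE Q E Θ :=
  { D with delta := D.delta ∩ δ' }

/-- The reachability-reduced DATE `reach(D)`: only useful states and
transitions between useful states are kept. -/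
def reachReduce (D : DATE Q E Θ) : DATE Q E Θ :=
  D.restrict {d | D.Useful d.src ∧ D.Useful d.tgt}

/-- Alphabet restriction `D ↾ Σ'`. -/
def alphaRestrict (D : DATE Q E Θ) (A : Set E) : DATE Q E Θ :=
  D.restrict {d | d.ev ∈ A}

/-- `Σ(T)`: the set of events occurring in some trace of `T`. -/
def eventsOf (T : Set (List E)) : Set E :=
  {e | ∃ t ∈ T, e ∈ t}

/-- Component-wise union of two DATEs (sharing initial state and initial
monitoring state). -/
def union (D₁ D₂ : DATE Q E Θ) : DATE Q E Θ :=
  { init := D₁.init, th0 := D₁.th0, bad := D₁.bad ∪ D₂.bad,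
    delta := D₁.delta ∪ D₂.delta }

/-- Component-wise union of a family of DATEs, with given initial state and
initial monitoring state. -/
def unionFamily {ι : Type*} (q0 : Q) (θ0 : Θ) (f : ι → DATE Q E Θ) : DATE Q E Θ :=
  { init := q0, th0 := θ0, bad := ⋃ i, (f i).bad, delta := ⋃ i, (f i).delta }

/-- A ground trace `t` uses a transition `d`. -/
def Uses (D : DATE Q E Θ) (t : List E) (d : DTrans Q E Θ) : Prop :=
  (¬ ∀ θ : Θ, d.cond θ = false) ∧
    ∃ t' : List E, (t' ++ [d.ev]) <+: t ∧ d.src ∈ D.approxRun {D.init} t'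

/-- Satisfaction of a DATE by a static parametrised trace. -/
def SSat {α : Type*} (P : SProg α E) (st : List (α × E)) (D : DATE Q E Θ) : Prop :=
  ∀ x : α, ∀ t ∈ P.proj x st, Sat t D

/-- Equivalence of two DATEs with respect to a static program. -/
def SEquiv {α : Type*} (P : SProg α E) (D D' : DATE Q E Θ) : Prop :=
  ∀ st ∈ P.traces, SSat P st D ↔ SSat P st D'

end DATE

/-- Translation of a property automaton into a DATE with `Θ = Unit`:
each transition `(q, e, q')` becomes `q —e|true↦skip→ q'`. -/
def PA.toDATE {Q E : Type*} (π : PA Q E) : DATE Q E Unit :=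
  { init := π.init, th0 := (), bad := π.bad,
    delta := {d | d.cond = (fun _ => true) ∧ d.act = id ∧ d.tgt = π.next d.src d.ev} }

/-- The flow-sensitive residual `residual₂(D, P)`. -/
def DATE.residual2 {α Q E Θ : Type*} (D : DATE Q E Θ) (P : SProg α E) : DATE Q E Θ :=
  (D.restrict {d | ∃ t ∈ P.projAll, D.Uses t d}).reachReduce

/-- Consecutive application of the flow-sensitive residual over a list of
static program over-approximations. -/
def DATE.residual2List {α Q E Θ : Type*} (D : DATE Q E Θ) :
    List (SProg α E) → DATE Q E Θ
  | [] => D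
  | P :: Ps => DATE.residual2List (D.residual2 P) Ps


namespace DATE

variable {Q E Θ : Type*}

/-- A state can reach a bad state via the static transition relation. -/
def CanBad (D : DATE Q E Θ) (q : Q) : Prop := ∃ q' ∈ D.bad, D.Reach q q'

lemma approxRun_append (D : DATE Q E Θ) (S : Set Q) (t₁ t₂ : List E) :
    D.approxRun S (t₁ ++ t₂) = D.approxRun (D.approxRun S t₁) t₂ :=
  List.foldl_append

lemma approxRun_mono (D : DATE Q E Θ) {S S' : Set Q} (h : S ⊆ S') (t : List E) :
    D.approxRun S t ⊆ D.approxRun S' t := by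
  induction t generalizing S S' with
  | nil => exact h
  | cons e t ih =>
      exact ih (fun q' hq' => by obtain ⟨q, hq, hs⟩ := hq'; exact ⟨q, h hq, hs⟩)

lemma reach_refl (D : DATE Q E Θ) (q : Q) : D.Reach q q := ⟨[], rfl⟩

lemma reach_trans (D : DATE Q E Θ) {q q' q'' : Q}
    (h₁ : D.Reach q q') (h₂ : D.Reach q' q'') : D.Reach q q'' := by
  obtain ⟨t₁, h₁⟩ := h₁
  obtain ⟨t₂, h₂⟩ := h₂
  refine ⟨t₁ ++ t₂, ?_⟩
  rw [approxRun_append]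
  exact approxRun_mono D (Set.singleton_subset_iff.mpr h₁) t₂ h₂

/-- One concrete step of any DATE with fewer transitions is covered by the
static transition relation. -/
lemma step_reach (D R : DATE Q E Θ) (hsub : R.delta ⊆ D.delta) (s : Q × Θ) (e : E) :
    D.Reach s.1 (R.step s e).1 := by
  unfold step
  split
  · next h =>
      obtain ⟨hmem, hsrc, hev, hcond⟩ := h.choose_spec
      refine ⟨[e], ⟨s.1, rfl, Or.inl ⟨h.choose, hsub hmem, hsrc, hev, rfl, ?_⟩⟩⟩
      intro hall
      rw [hall s.2] at hcond
      exact Bool.noConfusion hcond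
  · exact reach_refl D s.1

/-- Two DATEs with nested deterministic transition relations agree on a step
as long as every applicable transition of the bigger one is in the smaller. -/
lemma step_eq_of (D₁ D₂ : DATE Q E Θ) (hdet : D₂.Deterministic)
    (hsub : D₁.delta ⊆ D₂.delta) (s : Q × Θ) (e : E)
    (h : ∀ d ∈ D₂.delta, d.src = s.1 → d.ev = e → d.cond s.2 = true → d ∈ D₁.delta) :
    D₁.step s e = D₂.step s e := by
  unfold step
  by_cases h₂ : ∃ d ∈ D₂.delta, d.src = s.1 ∧ d.ev = e ∧ d.cond s.2 = true
  · have h₁ : ∃ d ∈ D₁.delta, d.src = s.1 ∧ d.ev = e ∧ d.cond s.2 = true := by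
      obtain ⟨d, hd, h'⟩ := h₂
      exact ⟨d, h d hd h'.1 h'.2.1 h'.2.2, h'⟩
    rw [dif_pos h₁, dif_pos h₂]
    obtain ⟨hm₁, hs₁, he₁, hc₁⟩ := h₁.choose_spec
    obtain ⟨hm₂, hs₂, he₂, hc₂⟩ := h₂.choose_spec
    have : h₁.choose = h₂.choose := by
      by_contra hne
      exact hdet _ (hsub hm₁) _ hm₂ (hs₁.trans hs₂.symm) (he₁.trans he₂.symm) hne s.2
        ⟨hc₁, hc₂⟩
    rw [this]
  · have h₁ : ¬ ∃ d ∈ D₁.delta, d.src = s.1 ∧ d.ev = e ∧ d.cond s.2 = true := by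
      intro ⟨d, hd, h'⟩
      exact h₂ ⟨d, hsub hd, h'⟩
    rw [dif_neg h₁, dif_neg h₂]

lemma restrict_det (D : DATE Q E Θ) (hdet : D.Deterministic) (S : Set (DTrans Q E Θ)) :
    (D.restrict S).Deterministic :=
  fun d hd d' hd' => hdet d hd.1 d' hd'.1

lemma run_cons (D : DATE Q E Θ) (s : Q × Θ) (e : E) (t : List E) :
    D.run s (e :: t) = D.run (D.step s e) t := rfl

/-- Runs of the alphabet restriction coincide with runs of the original
automaton on traces over the restricted alphabet. -/
lemma alphaRestrict_run (D : DATE Q E Θ) (hdet : D.Deterministic) (A : Set E)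
    (t : List E) (hA : ∀ e ∈ t, e ∈ A) (s : Q × Θ) :
    (D.alphaRestrict A).run s t = D.run s t := by
  induction t generalizing s with
  | nil => rfl
  | cons e t ih =>
      rw [run_cons, run_cons]
      have hstep : (D.alphaRestrict A).step s e = D.step s e := by
        refine step_eq_of _ _ hdet Set.inter_subset_left s e ?_
        intro d hd _ hev _
        exact ⟨hd, show d.ev ∈ A by rw [hev]; exact hA e List.mem_cons_self⟩
      rw [hstep]
      exact ih (fun e' he' => hA e' (List.mem_cons_of_mem e he')) _

lemma alphaRestrict_sat (D : DATE Q E Θ) (hdet : D.Deterministic) (A : Set E)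
    (t : List E) (hA : ∀ e ∈ t, e ∈ A) :
    Sat t (D.alphaRestrict A) ↔ Sat t D := by
  have key : ∀ t' : List E, t' <+: t →
      (D.alphaRestrict A).run ((D.alphaRestrict A).init, (D.alphaRestrict A).th0) t'
        = D.run (D.init, D.th0) t' := by
    intro t' ht'
    exact alphaRestrict_run D hdet A t'
      (fun e he => hA e (ht'.sublist.mem he)) _
  constructor
  · intro hs t' ht' hbad
    exact hs t' ht' (by rw [key t' ht']; exact hbad)
  · intro hs t' ht' hbad
    rw [key t' ht'] at hbad
    exact hs t' ht' hbad

/-- The central invariant relating runs of `D` and of `reach(D)`. -/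
lemma reach_inv (D : DATE Q E Θ) (hdet : D.Deterministic) :
    ∀ (t : List E) (s s' : Q × Θ),
      D.Reach D.init s.1 → D.Reach D.init s'.1 →
      ((s' = s ∧ D.CanBad s.1) ∨ (¬ D.CanBad s.1 ∧ ¬ D.CanBad s'.1)) →
      D.Reach D.init (D.run s t).1 ∧ D.Reach D.init (D.reachReduce.run s' t).1 ∧
        ((D.reachReduce.run s' t = D.run s t ∧ D.CanBad (D.run s t).1) ∨
         (¬ D.CanBad (D.run s t).1 ∧ ¬ D.CanBad (D.reachReduce.run s' t).1)) := by
  intro t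
  induction t with
  | nil => exact fun s s' h h' hinv => ⟨h, h', by
      rcases hinv with ⟨heq, hcb⟩ | hng
      · exact Or.inl ⟨heq, hcb⟩
      · exact Or.inr hng⟩
  | cons e t ih =>
      intro s s' hr hr' hinv
      rcases hinv with ⟨heq, hcb⟩ | ⟨hncb, hncb'⟩
      · -- equal states, current state can reach bad: steps coincide
        have hstep : D.reachReduce.step s e = D.step s e := by
          refine step_eq_of _ _ hdet Set.inter_subset_left s e ?_
          intro d hd hsrc hev hcond
          have hba : D.BadAfter s.1 := ⟨hr, hcb⟩
          have happ : D.ApproxStep s.1 e d.tgt :=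
            Or.inl ⟨d, hd, hsrc, hev, rfl, fun hall => by
              rw [hall s.2] at hcond; exact Bool.noConfusion hcond⟩
          refine ⟨hd, ?_, ?_⟩
          · rw [hsrc]; exact Or.inl hba
          · by_cases hb : D.BadAfter d.tgt
            · exact Or.inl hb
            · exact Or.inr ⟨hb, s.1, e, hba, happ⟩
        have hr₁ : D.Reach D.init (D.step s e).1 :=
          reach_trans D hr (step_reach D D (fun _ h => h) s e)
        rw [run_cons, run_cons, heq, hstep]
        by_cases hcb₁ : D.CanBad (D.step s e).1
        · exact ih (D.step s e) (D.step s e) hr₁ hr₁ (Or.inl ⟨rfl, hcb₁⟩)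
        · exact ih (D.step s e) (D.step s e) hr₁ hr₁ (Or.inr ⟨hcb₁, hcb₁⟩)
      · -- neither state can reach bad anymore
        have hs₁ : D.Reach s.1 (D.step s e).1 := step_reach D D (fun _ h => h) s e
        have hs₁' : D.Reach s'.1 (D.reachReduce.step s' e).1 :=
          step_reach D D.reachReduce Set.inter_subset_left s' e
        have hn₁ : ¬ D.CanBad (D.step s e).1 := fun ⟨qb, hqb, hrb⟩ =>
          hncb ⟨qb, hqb, reach_trans D hs₁ hrb⟩
        have hn₁' : ¬ D.CanBad (D.reachReduce.step s' e).1 := fun ⟨qb, hqb, hrb⟩ =>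
          hncb' ⟨qb, hqb, reach_trans D hs₁' hrb⟩
        rw [run_cons, run_cons]
        exact ih _ _ (reach_trans D hr hs₁) (reach_trans D hr' hs₁')
          (Or.inr ⟨hn₁, hn₁'⟩)

/-- `reach(D)` is equivalent to `D` on every ground trace. -/
lemma reachReduce_sat (D : DATE Q E Θ) (hdet : D.Deterministic) (t : List E) :
    Sat t D.reachReduce ↔ Sat t D := by
  have key : ∀ t' : List E,
      ((D.reachReduce.run (D.reachReduce.init, D.reachReduce.th0) t').1 ∈ D.reachReduce.bad
        ↔ (D.run (D.init, D.th0) t').1 ∈ D.bad) := by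
    intro t'
    have hinit : ((D.init, D.th0) : Q × Θ).1 = D.init := rfl
    have h := reach_inv D hdet t' (D.init, D.th0) (D.init, D.th0)
      (reach_refl D D.init) (reach_refl D D.init)
      (by
        by_cases hcb : D.CanBad D.init
        · exact Or.inl ⟨rfl, hcb⟩
        · exact Or.inr ⟨hcb, hcb⟩)
    rcases h.2.2 with ⟨heq, _⟩ | ⟨hn, hn'⟩
    · show (D.reachReduce.run (D.init, D.th0) t').1 ∈ D.bad ↔ _
      rw [heq]
    · constructor
      · intro hb
        exact absurd ⟨_, hb, reach_refl D _⟩ hn'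
      · intro hb
        exact absurd ⟨_, hb, reach_refl D _⟩ hn
  constructor
  · intro hs t' ht' hbad
    exact hs t' ht' ((key t').mpr hbad)
  · intro hs t' ht' hbad
    exact hs t' ht' ((key t').mp hbad)

end DATE

/-- The residual `residual₀(D) = reach(D ↾ Σ(P^S_Σ ⇓ OId))` is
equivalent to `D` with respect to the static program. -/
theorem residual0_equiv {α Q E Θ : Type*} (D : DATE Q E Θ)
    (hdet : D.Deterministic) (P : SProg α E) :
    DATE.SEquiv P ((D.alphaRestrict (DATE.eventsOf P.projAll)).reachReduce) D := by
  intro st hst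
  have key : ∀ (x : α), ∀ t ∈ P.proj x st,
      (DATE.Sat t ((D.alphaRestrict (DATE.eventsOf P.projAll)).reachReduce) ↔ DATE.Sat t D) := by
    intro x t ht
    have htall : t ∈ P.projAll := ⟨st, hst, x, ht⟩
    have hA : ∀ e ∈ t, e ∈ DATE.eventsOf P.projAll := fun e he => ⟨t, htall, he⟩
    have hdet' : (D.alphaRestrict (DATE.eventsOf P.projAll)).Deterministic :=
      D.restrict_det hdet _
    rw [DATE.reachReduce_sat _ hdet' t]
    exact DATE.alphaRestrict_sat D hdet _ t hA
  constructor
  · intro hs x t ht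
    exact (key x t ht).mp (hs x t ht)
  · intro hs x t ht
    exact (key x t ht).mpr (hs x t ht)
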